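/- Fix ℓ ≥ 1 and ζ > 0, and let (P_k^{(ℓ)}) and (P_k^{(ℓ−1)}) be orthonormal families for ω^{(ℓ)}(·;ζ) and ω^{(ℓ−1)}(·;ζ), with positive leading coefficients c_k^{(ℓ)}, c_k^{(ℓ−1)}. Set p_k := c_k^{(ℓ−1)}/c_k^{(ℓ)}, p̃_k := ((2ℓ−1)/(2ℓ+1))·c_k^{(ℓ)}/c_{k+1}^{(ℓ−1)}, and r_k := ((2ℓ−1)/(2ℓ+1))·c_{k−1}^{(ℓ)}/c_{k+1}^{(ℓ−1)} for k ≥ 1 (r₀ := 0). Then for every k ≥ 0 and all x ∈ ℝ: (a) (d/dx) P_{k+1}^{(ℓ−1)}(x) = ((2ℓ−1)/(2ℓ+1))·((k+1)/p̃_k)·P_k^{(ℓ)}(x) + ζ·r_k·P_{k−1}^{(ℓ)}(x); (b) ((2ℓ−1)/(2ℓ+1))·(x²−1)·(d/dx) P_k^{(ℓ)}(x) + (2ℓ−1)·x·P_k^{(ℓ)}(x) = (k+2ℓ+1)·p̃_k·P_{k+1}^{(ℓ−1)}(x) + ζ·p_k·P_k^{(ℓ−1)}(x) (with the convention P_{−1}^{(ℓ)}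 := 0). -/

import Mathlib

open MeasureTheory Polynomial

/-- `K₂(ζ) = ∫₀^∞ cosh(2t)·exp(−ζ·cosh t) dt`. -/
noncomputable def K2 (ζ : ℝ) : ℝ :=
  ∫ t in Set.Ioi (0 : ℝ), Real.cosh (2 * t) * Real.exp (-ζ * Real.cosh t)

/-- The weight `ω^{(ℓ)}(x;ζ) = ζ·(x²−1)^{ℓ+1/2}·exp(−ζx)/((2ℓ+1)·K₂(ζ))` on `[1,∞)`. -/
noncomputable def wgt (l : ℕ) (ζ : ℝ) (x : ℝ) : ℝ :=
  ζ * (x ^ 2 - 1) ^ ((l : ℝ) + 1 / 2) * Real.exp (-ζ * x) / ((2 * (l : ℝ) + 1) * K2 ζ)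

/-- An orthonormal family for the weight `ω^{(ℓ)}(·;ζ)`: real polynomials `P k` of degree
exactly `k`, positive leading coefficients, orthonormal for the weighted inner product. -/
def IsOrthoFam (l : ℕ) (ζ : ℝ) (P : ℕ → Polynomial ℝ) : Prop :=
  (∀ k : ℕ, (P k).degree = k) ∧ (∀ k : ℕ, 0 < (P k).leadingCoeff) ∧
  ∀ i k : ℕ, (∫ x in Set.Ioi (1 : ℝ), (P i).eval x * (P k).eval x * wgt l ζ x)
      = if i = k then 1 else 0

/-- `p_k = c_k^{(ℓ−1)} / c_k^{(ℓ)}` (ratio of leading coefficients); `Q` is the family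
for `ℓ−1` and `P` the family for `ℓ`. -/
noncomputable def pC (P Q : ℕ → Polynomial ℝ) (k : ℕ) : ℝ :=
  (Q k).leadingCoeff / (P k).leadingCoeff

/-- `r_k = ((2ℓ−1)/(2ℓ+1))·c_{k−1}^{(ℓ)}/c_{k+1}^{(ℓ−1)}` for `k ≥ 1`, with `r₀ = 0`. -/
noncomputable def rC (l : ℕ) (P Q : ℕ → Polynomial ℝ) (k : ℕ) : ℝ :=
  if k = 0 then 0
  else ((2 * (l : ℝ) - 1) / (2 * (l : ℝ) + 1)) * (P (k - 1)).leadingCoeff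
        / (Q (k + 1)).leadingCoeff

/-- `q_k = ∫ P_{k+1}^{(ℓ−1)}·P_k^{(ℓ)}·ω^{(ℓ)} dx`. -/
noncomputable def qC (l : ℕ) (ζ : ℝ) (P Q : ℕ → Polynomial ℝ) (k : ℕ) : ℝ :=
  ∫ x in Set.Ioi (1 : ℝ), (Q (k + 1)).eval x * (P k).eval x * wgt l ζ x

/-- `p̃_k = ((2ℓ−1)/(2ℓ+1))·c_k^{(ℓ)}/c_{k+1}^{(ℓ−1)}`. -/
noncomputable def ptC (l : ℕ) (P Q : ℕ → Polynomial ℝ) (k : ℕ) : ℝ :=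
  ((2 * (l : ℝ) - 1) / (2 * (l : ℝ) + 1)) * (P k).leadingCoeff / (Q (k + 1)).leadingCoeff

namespace Stmt11Aux
open Set Filter Real Topology

variable {ζ : ℝ}

lemma rpow_cont (m : ℕ) : Continuous (fun x : ℝ => (x ^ 2 - 1) ^ ((m : ℝ) + 1 / 2)) := by
  have hpos : (0:ℝ) < (m : ℝ) + 1 / 2 := by positivity
  refine continuous_iff_continuousAt.2 fun x => ?_
  exact (Real.continuousAt_rpow_const _ _ (Or.inr hpos.le)).comp (by fun_prop)

lemma wgt_continuous (m : ℕ) (ζ : ℝ) : Continuous (wgt m ζ) := by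
  unfold wgt
  apply Continuous.div_const
  exact (continuous_const.mul (rpow_cont m)).mul (by fun_prop)

lemma poly_mul_exp_neg (Q : Polynomial ℝ) {c : ℝ} (hc : 0 < c) :
    Tendsto (fun x => Q.eval x * Real.exp (-(c * x))) atTop (𝓝 0) := by
  have h1 : Tendsto (fun x : ℝ => c * x) atTop atTop :=
    Tendsto.const_mul_atTop hc tendsto_id
  have h2 := (Q.comp (Polynomial.C c⁻¹ * Polynomial.X)).tendsto_div_exp_atTop.comp h1
  refine h2.congr fun x => ?_
  simp [Polynomial.eval_comp, div_eq_mul_inv, Real.exp_neg, inv_mul_cancel_left₀ hc.ne']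

lemma rpow_le_pow {m : ℕ} {x : ℝ} (hx : 1 ≤ x) :
    (x ^ 2 - 1) ^ ((m : ℝ) + 1 / 2) ≤ x ^ (2 * m + 1) := by
  have hx0 : (0:ℝ) ≤ x := by linarith
  have h1 : (x ^ 2 - 1) ^ ((m : ℝ) + 1 / 2) ≤ (x ^ 2) ^ ((m : ℝ) + 1 / 2) := by
    apply Real.rpow_le_rpow (by nlinarith) (by nlinarith) (by positivity)
  refine h1.trans_eq ?_
  rw [← Real.rpow_natCast x 2, ← Real.rpow_mul hx0, ← Real.rpow_natCast x (2 * m + 1)]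
  congr 1
  push_cast; ring

lemma tendsto_aux (m : ℕ) (hζ : 0 < ζ) (p : Polynomial ℝ) :
    Tendsto (fun x => p.eval x *
      ((x ^ 2 - 1) ^ ((m : ℝ) + 1 / 2) * Real.exp (-(ζ / 2 * x)))) atTop (𝓝 0) := by
  have hc : 0 < ζ / 2 := by linarith
  have hQ := poly_mul_exp_neg (p * Polynomial.X ^ (2 * m + 1)) hc
  refine squeeze_zero_norm' ?_ (by simpa using hQ.norm)
  filter_upwards [eventually_ge_atTop (1:ℝ)] with x hx
  have hx0 : (0:ℝ) ≤ x := by linarith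
  have h0 : (0:ℝ) ≤ (x ^ 2 - 1) ^ ((m : ℝ) + 1 / 2) :=
    Real.rpow_nonneg (by nlinarith) _
  have hb := rpow_le_pow (m := m) hx
  simp only [norm_mul, Polynomial.eval_mul, Polynomial.eval_pow, Polynomial.eval_X,
    Real.norm_eq_abs, abs_of_nonneg h0, abs_of_nonneg (Real.exp_pos _).le,
    abs_of_nonneg (pow_nonneg hx0 (2*m+1))]
  rw [abs_of_nonneg hx0]
  calc |p.eval x| * ((x ^ 2 - 1) ^ ((m : ℝ) + 1 / 2) * Real.exp (-(ζ / 2 * x)))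
      ≤ |p.eval x| * (x ^ (2*m+1) * Real.exp (-(ζ / 2 * x))) := by
        apply mul_le_mul_of_nonneg_left ?_ (abs_nonneg _)
        exact mul_le_mul_of_nonneg_right hb (Real.exp_pos _).le
    _ = |p.eval x| * x ^ (2*m+1) * Real.exp (-(ζ / 2 * x)) := by ring

lemma tendsto_poly_wgt (m : ℕ) (hζ : 0 < ζ) (p : Polynomial ℝ) :
    Tendsto (fun x => p.eval x * wgt m ζ x) atTop (𝓝 0) := by
  have h1 := (tendsto_aux m hζ p).mul
    (Real.tendsto_exp_atBot.comp (Tendsto.const_mul_atTop_of_neg (by linarith : -(ζ/2) < 0) tendsto_id))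
  have h2 := h1.div_const ((2 * (m : ℝ) + 1) * K2 ζ)
  have h3 := h2.const_mul ζ
  simp only [mul_zero, zero_mul, zero_div] at h3
  refine h3.congr fun x => ?_
  simp only [Function.comp_apply, id_eq]
  have hE : Real.exp (-(ζ/2 * x)) * Real.exp (-(ζ/2) * x) = Real.exp (-ζ * x) := by
    rw [← Real.exp_add]; ring_nf
  unfold wgt
  linear_combination (ζ * p.eval x * (x^2-1)^((m:ℝ)+1/2) / ((2*(m:ℝ)+1)*K2 ζ)) * hE

lemma integrable_poly_wgt (m : ℕ) (hζ : 0 < ζ) (p : Polynomial ℝ) :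
    IntegrableOn (fun x => p.eval x * wgt m ζ x) (Set.Ioi (1:ℝ)) := by
  apply integrable_of_isBigO_exp_neg (half_pos hζ)
    (((Polynomial.continuous p).mul (wgt_continuous m ζ)).continuousOn)
  have h := ((tendsto_aux m hζ p).isBigO_one ℝ).mul
    (Asymptotics.isBigO_refl (fun x : ℝ => Real.exp (-(ζ/2) * x)) atTop)
  have h3 := (h.const_mul_left (ζ / ((2*(m:ℝ)+1)*K2 ζ))).congr_right (fun x => one_mul _)
  have hfun : (fun x => p.eval x * wgt m ζ x)
      = fun x => ζ / ((2*(m:ℝ)+1)*K2 ζ) *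
          (p.eval x * ((x^2-1)^((m:ℝ)+1/2) * Real.exp (-(ζ/2*x))) * Real.exp (-(ζ/2) * x)) := by
    funext x
    have hE : Real.exp (-(ζ/2 * x)) * Real.exp (-(ζ/2) * x) = Real.exp (-ζ * x) := by
      rw [← Real.exp_add]; ring_nf
    unfold wgt
    rw [← hE]; ring
  rw [show ((fun x => p.eval x) * wgt m ζ) = (fun x => p.eval x * wgt m ζ x) from rfl, hfun]
  exact h3

noncomputable def J (m : ℕ) (ζ : ℝ) (f : Polynomial ℝ) : ℝ :=
  ∫ x in Set.Ioi (1:ℝ), f.eval x * wgt m ζ x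

lemma cast_sub_one {l : ℕ} (hl : 1 ≤ l) : ((l - 1 : ℕ) : ℝ) = (l:ℝ) - 1 := by
  push_cast [Nat.cast_sub hl]; ring

lemma two_l_sub_one_pos {l : ℕ} (hl : 1 ≤ l) : (0:ℝ) < 2*(l:ℝ) - 1 := by
  have : (1:ℝ) ≤ l := by exact_mod_cast hl
  linarith

lemma wgt_hasDerivAt {l : ℕ} (hl : 1 ≤ l) (hK : K2 ζ ≠ 0) {x : ℝ} (hx : 1 < x) :
    HasDerivAt (wgt l ζ) ((2*(l:ℝ)-1) * x * wgt (l-1) ζ x - ζ * wgt l ζ x) x := by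
  have hb : (0:ℝ) < x^2 - 1 := by nlinarith
  have h1 : HasDerivAt (fun y : ℝ => (y^2 - 1) ^ ((l:ℝ) + 1/2))
      (2*x * (((l:ℝ) + 1/2) * (x^2-1)^(((l:ℝ) + 1/2) - 1))) x := by
    have := ((hasDerivAt_pow 2 x).sub_const 1).rpow_const (p := (l:ℝ) + 1/2) (Or.inl hb.ne')
    convert this using 1
    simp; ring
  have h2 : HasDerivAt (fun y : ℝ => Real.exp (-ζ * y)) (-ζ * Real.exp (-ζ * x)) x := by
    have h := ((hasDerivAt_id x).const_mul (-ζ)).exp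
    have : -ζ * Real.exp (-ζ * x) = Real.exp (-ζ * id x) * (-ζ * 1) := by simp [id]; ring
    rw [this]
    exact h
  have h3 := ((h1.const_mul ζ).mul h2).div_const ((2*(l:ℝ)+1) * K2 ζ)
  have heq : wgt l ζ = fun y => ζ * (y^2-1)^((l:ℝ) + 1/2) * Real.exp (-ζ*y)
      / ((2*(l:ℝ)+1)*K2 ζ) := rfl
  rw [heq]
  refine h3.congr_deriv ?_
  unfold wgt
  rw [cast_sub_one hl]
  rw [show (l:ℝ) - 1 + 1/2 = ((l:ℝ) + 1/2) - 1 by ring]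
  have h2l1 : (2*(l:ℝ)-1) ≠ 0 := (two_l_sub_one_pos hl).ne'
  have h2l1'' : (2*((l:ℝ)-1)+1) = 2*(l:ℝ)-1 := by ring
  rw [h2l1'']
  have hc : (2*(l:ℝ)+1) ≠ 0 := by positivity
  field_simp
  ring

lemma J_deriv {l : ℕ} (hl : 1 ≤ l) (hζ : 0 < ζ) (hK : K2 ζ ≠ 0) (u : Polynomial ℝ) :
    J l ζ (Polynomial.derivative u)
      = ζ * J l ζ u - (2*(l:ℝ)-1) * J (l-1) ζ (Polynomial.X * u) := by
  set F' : ℝ → ℝ := fun x => (Polynomial.derivative u).eval x * wgt l ζ x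
      + u.eval x * ((2*(l:ℝ)-1) * x * wgt (l-1) ζ x - ζ * wgt l ζ x) with hF'
  have hderiv : ∀ x ∈ Set.Ioi (1:ℝ), HasDerivAt (fun y => u.eval y * wgt l ζ y) (F' x) x :=
    fun x hx => (u.hasDerivAt x).mul (wgt_hasDerivAt hl hK hx)
  have h1 := integrable_poly_wgt l hζ (Polynomial.derivative u)
  have h2 := (integrable_poly_wgt (l-1) hζ (Polynomial.X * u)).const_mul (2*(l:ℝ)-1)
  have h3 := (integrable_poly_wgt l hζ u).const_mul ζ
  have e : F' = fun x => (Polynomial.derivative u).eval x * wgt l ζ x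
      + ((2*(l:ℝ)-1) * ((Polynomial.X*u).eval x * wgt (l-1) ζ x)
          - ζ * (u.eval x * wgt l ζ x)) := by
    funext x; simp only [hF', Polynomial.eval_mul, Polynomial.eval_X]; ring
  have hint : IntegrableOn F' (Set.Ioi (1:ℝ)) := by
    rw [e]; exact h1.add (h2.sub h3)
  have hcont : ContinuousWithinAt (fun y => u.eval y * wgt l ζ y) (Set.Ici 1) 1 :=
    ((Polynomial.continuous u).mul (wgt_continuous l ζ)).continuousWithinAt
  have htend := tendsto_poly_wgt l hζ u
  have h0 : u.eval 1 * wgt l ζ 1 = 0 := by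
    have hz : ((1:ℝ)^2 - 1) = 0 := by norm_num
    unfold wgt
    rw [hz, Real.zero_rpow (by positivity : ((l:ℝ)+1/2) ≠ 0)]
    simp
  have key := integral_Ioi_of_hasDerivAt_of_tendsto hcont hderiv hint htend
  rw [h0, zero_sub, neg_zero] at key
  have hsplit : ∫ x in Set.Ioi (1:ℝ), F' x
      = J l ζ (Polynomial.derivative u)
        + ((2*(l:ℝ)-1) * J (l-1) ζ (Polynomial.X*u) - ζ * J l ζ u) := by
    have hsub : Integrable (fun x => (2*(l:ℝ)-1) * ((Polynomial.X*u).eval x * wgt (l-1) ζ x)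
        - ζ * (u.eval x * wgt l ζ x)) (volume.restrict (Set.Ioi (1:ℝ))) := h2.sub h3
    simp only [e]
    rw [integral_add h1 hsub, integral_sub h2 h3, integral_const_mul, integral_const_mul]
    rfl
  rw [key] at hsplit
  linarith

lemma K2_ne {l : ℕ} {P : ℕ → Polynomial ℝ} (hP : IsOrthoFam l ζ P) : K2 ζ ≠ 0 := by
  intro h
  have h00 := hP.2.2 0 0
  rw [if_pos rfl] at h00
  have hz : ∀ x : ℝ, (P 0).eval x * (P 0).eval x * wgt l ζ x = 0 := by
    intro x; unfold wgt; rw [h]; simp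
  simp only [hz, integral_zero] at h00
  norm_num at h00

lemma wgt_rel {l : ℕ} (hl : 1 ≤ l) (hK : K2 ζ ≠ 0) {x : ℝ} (hx : 1 < x) :
    ((2*(l:ℝ)-1)/(2*(l:ℝ)+1)) * ((x^2 - 1) * wgt (l-1) ζ x) = wgt l ζ x := by
  have hb : (0:ℝ) < x^2 - 1 := by nlinarith
  unfold wgt
  rw [cast_sub_one hl, show 2*((l:ℝ)-1)+1 = 2*(l:ℝ)-1 by ring]
  have he : (x^2-1) ^ ((l:ℝ)+1/2) = (x^2-1) * (x^2-1)^((l:ℝ)-1+1/2) := by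
    rw [show (l:ℝ)+1/2 = 1 + ((l:ℝ)-1+1/2) by ring, Real.rpow_add hb, Real.rpow_one]
  rw [he]
  have h1 : (2*(l:ℝ)-1) ≠ 0 := (two_l_sub_one_pos hl).ne'
  have h2 : (2*(l:ℝ)+1) ≠ 0 := by positivity
  field_simp

lemma J_rel {l : ℕ} (hl : 1 ≤ l) (hK : K2 ζ ≠ 0) (f : Polynomial ℝ) :
    J (l-1) ζ (Polynomial.C ((2*(l:ℝ)-1)/(2*(l:ℝ)+1)) * ((Polynomial.X^2 - 1) * f))
      = J l ζ f := by
  unfold J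
  apply setIntegral_congr_fun measurableSet_Ioi
  intro x hx
  simp only [Polynomial.eval_mul, Polynomial.eval_C, Polynomial.eval_sub,
    Polynomial.eval_pow, Polynomial.eval_X, Polynomial.eval_one]
  rw [← wgt_rel hl hK hx]
  ring

lemma J_add {m : ℕ} (hζ : 0 < ζ) (f g : Polynomial ℝ) :
    J m ζ (f + g) = J m ζ f + J m ζ g := by
  unfold J
  simp only [Polynomial.eval_add, add_mul]
  exact integral_add (integrable_poly_wgt m hζ f) (integrable_poly_wgt m hζ g)

lemma J_sub {m : ℕ} (hζ : 0 < ζ) (f g : Polynomial ℝ) :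
    J m ζ (f - g) = J m ζ f - J m ζ g := by
  unfold J
  simp only [Polynomial.eval_sub, sub_mul]
  exact integral_sub (integrable_poly_wgt m hζ f) (integrable_poly_wgt m hζ g)

lemma J_Cmul {m : ℕ} (a : ℝ) (f : Polynomial ℝ) :
    J m ζ (Polynomial.C a * f) = a * J m ζ f := by
  unfold J
  simp only [Polynomial.eval_mul, Polynomial.eval_C, mul_assoc]
  exact integral_const_mul a _

lemma J_zero {m : ℕ} : J m ζ (0 : Polynomial ℝ) = 0 := by
  unfold J; simp

section Ortho
variable {m : ℕ} {F : ℕ → Polynomial ℝ}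

lemma F_ne (hF : IsOrthoFam m ζ F) (k : ℕ) : F k ≠ 0 := fun h => by
  have := hF.2.1 k; rw [h] at this; simp at this

lemma F_natDeg (hF : IsOrthoFam m ζ F) (k : ℕ) : (F k).natDegree = k :=
  Polynomial.natDegree_eq_of_degree_eq_some (hF.1 k)

lemma F_lc_ne (hF : IsOrthoFam m ζ F) (k : ℕ) : (F k).leadingCoeff ≠ 0 := (hF.2.1 k).ne'

lemma F_coeff_self (hF : IsOrthoFam m ζ F) (k : ℕ) : (F k).coeff k = (F k).leadingCoeff := by
  rw [Polynomial.leadingCoeff, F_natDeg hF k]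

lemma J_orth (hF : IsOrthoFam m ζ F) (i k : ℕ) :
    J m ζ (F i * F k) = if i = k then 1 else 0 := by
  unfold J
  simp only [Polynomial.eval_mul]
  exact hF.2.2 i k

lemma J_lt_aux (hζ : 0 < ζ) (hF : IsOrthoFam m ζ F) :
    ∀ n : ℕ, ∀ f : Polynomial ℝ, f.natDegree < n → ∀ j : ℕ, f.degree < (j : ℕ) →
      J m ζ (f * F j) = 0 := by
  intro n
  induction n with
  | zero => intro f h; exact absurd h (Nat.not_lt_zero _)
  | succ n ih =>
    intro f hfn j hfj
    by_cases hf0 : f = 0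
    · rw [hf0, zero_mul, J_zero]
    · set d := f.natDegree with hd
      have hfd : f.degree = (d : ℕ) := Polynomial.degree_eq_natDegree hf0
      have hdj : d < j := by
        rw [hfd] at hfj; exact_mod_cast hfj
      set r := f.leadingCoeff / (F d).leadingCoeff with hr
      have hrne : r ≠ 0 := div_ne_zero (Polynomial.leadingCoeff_ne_zero.2 hf0) (F_lc_ne hF d)
      have hdC : (Polynomial.C r * F d).degree = f.degree := by
        rw [Polynomial.degree_C_mul hrne, hF.1 d, hfd]
      have hlcC : (Polynomial.C r * F d).leadingCoeff = f.leadingCoeff := by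
        rw [Polynomial.leadingCoeff_mul, Polynomial.leadingCoeff_C, hr,
          div_mul_cancel₀ _ (F_lc_ne hF d)]
      have hgd : (f - Polynomial.C r * F d).degree < f.degree :=
        Polynomial.degree_sub_lt hdC.symm hf0 hlcC.symm
      set g := f - Polynomial.C r * F d with hg
      have hsplit : f = g + Polynomial.C r * F d := by rw [hg]; ring
      have hJg : J m ζ (g * F j) = 0 := by
        by_cases hg0 : g = 0
        · rw [hg0, zero_mul, J_zero]
        · apply ih g ?_ j ?_
          · have := Polynomial.natDegree_lt_natDegree hg0 hgd
            omega
          · calc g.degree < f.degree := hgd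
              _ ≤ (j : ℕ) := by rw [hfd]; exact_mod_cast hdj.le
      rw [hsplit, add_mul, J_add hζ, hJg, mul_assoc, J_Cmul, J_orth hF,
        if_neg hdj.ne]
      ring

lemma J_lt (hζ : 0 < ζ) (hF : IsOrthoFam m ζ F) (f : Polynomial ℝ) (j : ℕ)
    (h : f.degree < (j : ℕ)) : J m ζ (f * F j) = 0 :=
  J_lt_aux hζ hF (f.natDegree + 1) f (Nat.lt_succ_self _) j h

lemma J_lead (hζ : 0 < ζ) (hF : IsOrthoFam m ζ F) (f : Polynomial ℝ) (j : ℕ)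
    (hdeg : f.degree ≤ (j : ℕ)) :
    J m ζ (f * F j) = f.coeff j / (F j).leadingCoeff := by
  set r := f.coeff j / (F j).leadingCoeff with hr
  have hgd : (f - Polynomial.C r * F j).degree < (j : ℕ) := by
    rw [Polynomial.degree_lt_iff_coeff_zero]
    intro i hi
    rcases eq_or_lt_of_le hi with heq|hlt
    · subst heq
      simp only [Polynomial.coeff_sub, Polynomial.coeff_C_mul, F_coeff_self hF j]
      rw [hr, div_mul_cancel₀ _ (F_lc_ne hF j), sub_self]
    · have h1 : f.coeff i = 0 :=
        Polynomial.coeff_eq_zero_of_degree_lt (lt_of_le_of_lt hdeg (by exact_mod_cast hlt))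
      have h2 : (F j).coeff i = 0 :=
        Polynomial.coeff_eq_zero_of_degree_lt (by rw [hF.1 j]; exact_mod_cast hlt)
      simp [h1, h2, Polynomial.coeff_C_mul]
  have hsplit : f = (f - Polynomial.C r * F j) + Polynomial.C r * F j := by ring
  rw [hsplit, add_mul, J_add hζ, J_lt hζ hF _ j hgd, mul_assoc, J_Cmul, J_orth hF,
    if_pos rfl]
  ring

lemma eq_zero_of_J (hζ : 0 < ζ) (hF : IsOrthoFam m ζ F) :
    ∀ n : ℕ, ∀ f : Polynomial ℝ, f.degree ≤ (n : ℕ) →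
      (∀ j ≤ n, J m ζ (f * F j) = 0) → f = 0 := by
  intro n
  induction n with
  | zero =>
    intro f hdeg hj
    have h := J_lead hζ hF f 0 hdeg
    rw [hj 0 le_rfl] at h
    have hc : f.coeff 0 = 0 := by
      rcases div_eq_zero_iff.mp h.symm with h'|h'
      · exact h'
      · exact absurd h' (F_lc_ne hF 0)
    have hfc := Polynomial.eq_C_of_degree_le_zero (by exact_mod_cast hdeg)
    rw [hfc, hc, map_zero]
  | succ n ih =>
    intro f hdeg hj
    have h := J_lead hζ hF f (n+1) (by exact_mod_cast hdeg)
    rw [hj (n+1) le_rfl] at h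
    have hc : f.coeff (n+1) = 0 := by
      rcases div_eq_zero_iff.mp h.symm with h'|h'
      · exact h'
      · exact absurd h' (F_lc_ne hF (n+1))
    have hdeg' : f.degree ≤ (n : ℕ) := by
      rw [Polynomial.degree_le_iff_coeff_zero] at hdeg ⊢
      intro i hi
      have hni : n < i := by exact_mod_cast hi
      rcases eq_or_lt_of_le (Nat.succ_le_of_lt hni) with rfl|hlt
      · exact hc
      · exact hdeg i (by exact_mod_cast hlt)
    exact ih f hdeg' (fun j hjn => hj j (Nat.le_succ_of_le hjn))

lemma poly_eq_of_J (hζ : 0 < ζ) (hF : IsOrthoFam m ζ F) (n : ℕ) (f g : Polynomial ℝ)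
    (hf : f.degree ≤ (n : ℕ)) (hg : g.degree ≤ (n : ℕ))
    (h : ∀ j ≤ n, J m ζ (f * F j) = J m ζ (g * F j)) : f = g := by
  have hz := eq_zero_of_J hζ hF n (f - g)
    (le_trans (Polynomial.degree_sub_le f g) (max_le hf hg))
    (fun j hj => by rw [sub_mul, J_sub hζ, h j hj, sub_self])
  exact sub_eq_zero.mp hz

end Ortho

section Main
open Polynomial
variable {l : ℕ} {P Q : ℕ → Polynomial ℝ}

lemma natDegree_C_mul_le (a : ℝ) (p : Polynomial ℝ) :
    (Polynomial.C a * p).natDegree ≤ p.natDegree :=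
  le_trans Polynomial.natDegree_mul_le (by simp)

lemma part_b (hl : 1 ≤ l) (hζ : 0 < ζ)
    (hP : IsOrthoFam l ζ P) (hQ : IsOrthoFam (l-1) ζ Q) (k : ℕ) :
    C ((2*(l:ℝ)-1)/(2*(l:ℝ)+1)) * ((X^2 - 1) * derivative (P k))
      + C (2*(l:ℝ)-1) * (X * P k)
    = C (((k:ℝ) + 2*(l:ℝ) + 1) * ptC l P Q k) * Q (k+1)
      + C (ζ * pC P Q k) * Q k := by
  have hK := K2_ne hP
  have h2l1 : (0:ℝ) < 2*(l:ℝ)-1 := two_l_sub_one_pos hl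
  have h2lp : (2*(l:ℝ)+1) ≠ 0 := by positivity
  set c : ℝ := (2*(l:ℝ)-1)/(2*(l:ℝ)+1) with hc
  set L : Polynomial ℝ := C c * ((X^2-1) * derivative (P k))
      + C (2*(l:ℝ)-1) * (X * P k) with hL
  have hder : ((X^2 - 1 : Polynomial ℝ) * derivative (P k)).natDegree ≤ k+1 := by
    rcases Nat.eq_zero_or_pos k with rfl|hk
    · have hP0 : derivative (P 0) = 0 := by
        rw [Polynomial.eq_C_of_degree_le_zero (by simp [hP.1 0] : (P 0).degree ≤ 0),
          Polynomial.derivative_C]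
      rw [hP0, mul_zero]; simp
    · refine le_trans Polynomial.natDegree_mul_le ?_
      have h1 : (Polynomial.X^2 - 1 : Polynomial ℝ).natDegree ≤ 2 :=
        le_trans (Polynomial.natDegree_sub_le _ _) (by simp)
      have h2 : (derivative (P k)).natDegree ≤ k - 1 := by
        have := Polynomial.natDegree_derivative_le (P k)
        rwa [F_natDeg hP k] at this
      omega
  have hLdeg : L.degree ≤ ((k+1 : ℕ) : ℕ) := by
    rw [← Polynomial.natDegree_le_iff_degree_le]
    refine le_trans (Polynomial.natDegree_add_le _ _) (max_le ?_ ?_)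
    · exact le_trans (natDegree_C_mul_le _ _) hder
    · refine le_trans (natDegree_C_mul_le _ _) ?_
      refine le_trans Polynomial.natDegree_mul_le ?_
      rw [Polynomial.natDegree_X, F_natDeg hP k]
      omega
  have hLQ : ∀ g : Polynomial ℝ, J (l-1) ζ (L * g)
      = ζ * J l ζ (P k * g) - J l ζ (P k * derivative g) := by
    intro g
    have e1 : L * g = C c * ((X^2-1) * (derivative (P k) * g))
        + C (2*(l:ℝ)-1) * (X * (P k * g)) := by rw [hL]; ring
    have e2 : derivative (P k) * g = derivative (P k * g) - P k * derivative g := by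
      rw [Polynomial.derivative_mul]; ring
    rw [e1, J_add hζ, hc, J_rel hl hK, J_Cmul, e2, J_sub hζ, J_deriv hl hζ hK]
    ring
  apply poly_eq_of_J hζ hQ (k+1) _ _ hLdeg
  · refine le_trans (Polynomial.degree_add_le _ _) (max_le ?_ ?_)
    · rw [← Polynomial.natDegree_le_iff_degree_le]
      exact le_trans (natDegree_C_mul_le _ _) (le_of_eq (F_natDeg hQ (k+1)))
    · rw [← Polynomial.natDegree_le_iff_degree_le]
      exact le_trans (natDegree_C_mul_le _ _) (by rw [F_natDeg hQ k]; omega)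
  intro j hj
  have eR : (C (((k:ℝ) + 2*(l:ℝ) + 1) * ptC l P Q k) * Q (k+1)
      + C (ζ * pC P Q k) * Q k) * Q j
      = C (((k:ℝ) + 2*(l:ℝ) + 1) * ptC l P Q k) * (Q (k+1) * Q j)
        + C (ζ * pC P Q k) * (Q k * Q j) := by ring
  rw [eR, J_add hζ, J_Cmul, J_Cmul, J_orth hQ, J_orth hQ]
  by_cases hj1 : j = k + 1
  · subst hj1
    rw [if_pos rfl, if_neg (by omega), J_lead hζ hQ L (k+1) hLdeg]
    have hXP : ((Polynomial.X : Polynomial ℝ) * P k).coeff (k+1) = (P k).leadingCoeff := by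
      rw [Polynomial.coeff_X_mul, F_coeff_self hP k]
    have hD : ((X^2 - 1 : Polynomial ℝ) * derivative (P k)).coeff (k+1)
        = (k : ℝ) * (P k).leadingCoeff := by
      rcases Nat.eq_zero_or_pos k with rfl|hk
      · have hP0 : derivative (P 0) = 0 := by
          rw [Polynomial.eq_C_of_degree_le_zero (by simp [hP.1 0] : (P 0).degree ≤ 0),
            Polynomial.derivative_C]
        rw [hP0, mul_zero]; simp
      · have e3 : (X^2 - 1 : Polynomial ℝ) * derivative (P k)
            = X^2 * derivative (P k) - derivative (P k) := by ring
        rw [e3, Polynomial.coeff_sub]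
        have h4 : (derivative (P k)).coeff (k+1) = 0 := by
          rw [Polynomial.coeff_derivative,
            Polynomial.coeff_eq_zero_of_natDegree_lt (by rw [F_natDeg hP k]; omega), zero_mul]
        have h5 : ((X:Polynomial ℝ)^2 * derivative (P k)).coeff (k+1)
            = (derivative (P k)).coeff (k-1) := by
          rw [show k + 1 = (k-1) + 2 by omega, Polynomial.coeff_X_pow_mul]
        rw [h4, h5, Polynomial.coeff_derivative,
          show k-1+1 = k by omega, F_coeff_self hP k, sub_zero, Nat.cast_sub hk]
        push_cast
        ring
    have hLc : L.coeff (k+1)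
        = (2*(l:ℝ)-1) * ((k:ℝ) + 2*(l:ℝ) + 1) / (2*(l:ℝ)+1) * (P k).leadingCoeff := by
      rw [hL, Polynomial.coeff_add, Polynomial.coeff_C_mul, Polynomial.coeff_C_mul, hD, hXP, hc]
      field_simp
      ring
    rw [hLc]
    unfold ptC
    field_simp [F_lc_ne hQ (k+1), h2lp]
    ring
  · have hjk : j ≤ k := by omega
    rw [hLQ (Q j)]
    have hQd : J l ζ (P k * derivative (Q j)) = 0 := by
      rw [mul_comm]
      apply J_lt hζ hP
      calc (derivative (Q j)).degree < (Q j).degree := Polynomial.degree_derivative_lt (F_ne hQ j)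
        _ ≤ ((k:ℕ) : WithBot ℕ) := by rw [hQ.1 j]; exact_mod_cast hjk
    rw [hQd, if_neg (by omega)]
    by_cases hjk' : j = k
    · subst hjk'
      rw [if_pos rfl, mul_comm (P j) (Q j), J_lead hζ hP (Q j) j (le_of_eq (hQ.1 j)),
        F_coeff_self hQ j]
      unfold pC
      ring
    · rw [if_neg (by omega), mul_comm (P k) (Q j),
        J_lt hζ hP (Q j) k (by rw [hQ.1 j]; exact_mod_cast lt_of_le_of_ne hjk hjk')]
      ring

lemma part_a (hl : 1 ≤ l) (hζ : 0 < ζ)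
    (hP : IsOrthoFam l ζ P) (hQ : IsOrthoFam (l-1) ζ Q) (k : ℕ) :
    derivative (Q (k+1))
      = C ((2*(l:ℝ)-1)/(2*(l:ℝ)+1) * (((k:ℝ)+1) / ptC l P Q k)) * P k
        + C (ζ * rC l P Q k) * P (k-1) := by
  have hK := K2_ne hP
  have h2l1 : (0:ℝ) < 2*(l:ℝ)-1 := two_l_sub_one_pos hl
  have h2lp : (2*(l:ℝ)+1) ≠ 0 := by positivity
  have hcne : (2*(l:ℝ)-1)/(2*(l:ℝ)+1) ≠ 0 := div_ne_zero h2l1.ne' h2lp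
  have hdQ : (derivative (Q (k+1))).degree ≤ ((k:ℕ) : WithBot ℕ) := by
    rw [← Polynomial.natDegree_le_iff_degree_le]
    have := Polynomial.natDegree_derivative_le (Q (k+1))
    rw [F_natDeg hQ (k+1)] at this; omega
  apply poly_eq_of_J hζ hP k _ _ hdQ
  · refine le_trans (Polynomial.degree_add_le _ _) (max_le ?_ ?_) <;>
      rw [← Polynomial.natDegree_le_iff_degree_le]
    · exact le_trans (natDegree_C_mul_le _ _) (le_of_eq (F_natDeg hP k))
    · exact le_trans (natDegree_C_mul_le _ _) (by rw [F_natDeg hP (k-1)]; omega)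
  intro j hj
  have eR : (C ((2*(l:ℝ)-1)/(2*(l:ℝ)+1) * (((k:ℝ)+1) / ptC l P Q k)) * P k
      + C (ζ * rC l P Q k) * P (k-1)) * P j
      = C ((2*(l:ℝ)-1)/(2*(l:ℝ)+1) * (((k:ℝ)+1) / ptC l P Q k)) * (P k * P j)
        + C (ζ * rC l P Q k) * (P (k-1) * P j) := by ring
  rw [eR, J_add hζ, J_Cmul, J_Cmul, J_orth hP, J_orth hP]
  by_cases hjk : j = k
  · subst hjk
    rw [if_pos rfl]
    have h2 : ζ * rC l P Q j * (if j - 1 = j then (1:ℝ) else 0) = 0 := by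
      rcases Nat.eq_zero_or_pos j with rfl|hk
      · simp [rC]
      · rw [if_neg (by omega), mul_zero]
    rw [h2, add_zero, J_lead hζ hP (derivative (Q (j+1))) j hdQ,
      Polynomial.coeff_derivative, F_coeff_self hQ (j+1)]
    unfold ptC
    field_simp [F_lc_ne hP j, F_lc_ne hQ (j+1), h2lp, h2l1.ne']
  · have hjk' : j < k := lt_of_le_of_ne hj hjk
    have hk1 : 1 ≤ k := by omega
    rw [if_neg (Ne.symm hjk)]
    have e2 : derivative (Q (k+1)) * P j
        = derivative (Q (k+1) * P j) - Q (k+1) * derivative (P j) := by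
      rw [Polynomial.derivative_mul]; ring
    rw [e2, J_sub hζ, J_deriv hl hζ hK (Q (k+1) * P j)]
    set c : ℝ := (2*(l:ℝ)-1)/(2*(l:ℝ)+1) with hc
    have e3 : J l ζ (Q (k+1) * derivative (P j))
        = J (l-1) ζ (C c * ((X^2-1) * (Q (k+1) * derivative (P j)))) :=
      (J_rel hl hK _).symm
    have e4 : J l ζ (Q (k+1) * P j)
        = c * J (l-1) ζ (((X^2-1) * P j) * Q (k+1)) := by
      rw [hc, ← J_Cmul, ← J_rel hl hK (Q (k+1) * P j)]
      congr 1
      ring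
    -- the combined polynomial equals L_j * Q (k+1) where L_j is the part_b polynomial
    have e5 : (C c * ((X^2-1) * derivative (P j)) + C (2*(l:ℝ)-1) * (X * P j)) * Q (k+1)
        = C (2*(l:ℝ)-1) * (X * (Q (k+1) * P j))
          + C c * ((X^2-1) * (Q (k+1) * derivative (P j))) := by ring
    have e6 : (2*(l:ℝ)-1) * J (l-1) ζ (X * (Q (k+1) * P j))
          + J (l-1) ζ (C c * ((X^2-1) * (Q (k+1) * derivative (P j))))
        = J (l-1) ζ ((C c * ((X^2-1) * derivative (P j)) + C (2*(l:ℝ)-1) * (X * P j)) * Q (k+1)) := by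
      rw [e5, J_add hζ]
      simp only [J_Cmul]
    have e7 : J (l-1) ζ ((C c * ((X^2-1) * derivative (P j)) + C (2*(l:ℝ)-1) * (X * P j)) * Q (k+1))
        = 0 := by
      rw [hc, part_b hl hζ hP hQ j]
      have eRR : (C (((j:ℝ) + 2*(l:ℝ) + 1) * ptC l P Q j) * Q (j+1)
          + C (ζ * pC P Q j) * Q j) * Q (k+1)
          = C (((j:ℝ) + 2*(l:ℝ) + 1) * ptC l P Q j) * (Q (j+1) * Q (k+1))
            + C (ζ * pC P Q j) * (Q j * Q (k+1)) := by ring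
      rw [eRR, J_add hζ, J_Cmul, J_Cmul, J_orth hQ, J_orth hQ,
        if_neg (by omega), if_neg (by omega)]
      ring
    have e8 : J (l-1) ζ (((X^2-1) * P j) * Q (k+1))
        = ((X^2-1 : Polynomial ℝ) * P j).coeff (k+1) / (Q (k+1)).leadingCoeff := by
      apply J_lead hζ hQ
      rw [← Polynomial.natDegree_le_iff_degree_le]
      refine le_trans Polynomial.natDegree_mul_le ?_
      have h1 : (Polynomial.X^2 - 1 : Polynomial ℝ).natDegree ≤ 2 :=
        le_trans (Polynomial.natDegree_sub_le _ _) (by simp)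
      rw [F_natDeg hP j]; omega
    have e9 : ((X^2-1 : Polynomial ℝ) * P j).coeff (k+1) = (P j).coeff (k-1) := by
      have e3' : (X^2 - 1 : Polynomial ℝ) * P j = X^2 * P j - P j := by ring
      rw [e3', Polynomial.coeff_sub, show k + 1 = (k-1) + 2 by omega,
        Polynomial.coeff_X_pow_mul,
        Polynomial.coeff_eq_zero_of_natDegree_lt
          (show (P j).natDegree < (k-1)+2 by rw [F_natDeg hP j]; omega), sub_zero]
    by_cases hj1 : j = k - 1
    · subst hj1
      rw [if_pos rfl, e3, e4, e8, e9, F_coeff_self hP (k-1)]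
      unfold rC
      rw [if_neg (by omega : ¬ (k = 0)), ← hc]
      linear_combination -(e6.trans e7)
    · rw [if_neg (fun h => hj1 h.symm), e3, e4, e8, e9,
        Polynomial.coeff_eq_zero_of_natDegree_lt (by rw [F_natDeg hP j]; omega)]
      linear_combination -(e6.trans e7)

end Main

end Stmt11Aux

theorem stmt11 (l : ℕ) (hl : 1 ≤ l) (ζ : ℝ) (hζ : 0 < ζ)
    (P Q : ℕ → Polynomial ℝ)
    (hP : IsOrthoFam l ζ P) (hQ : IsOrthoFam (l - 1) ζ Q) :
    ∀ k : ℕ, ∀ x : ℝ,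
      -- (a)  (with the convention `P_{−1} = 0`, encoded by `r₀ = 0`)
      ((Polynomial.derivative (Q (k + 1))).eval x
          = ((2 * (l : ℝ) - 1) / (2 * (l : ℝ) + 1)) * (((k : ℝ) + 1) / ptC l P Q k)
                * (P k).eval x
            + ζ * rC l P Q k * (P (k - 1)).eval x) ∧
      -- (b)
      ((2 * (l : ℝ) - 1) / (2 * (l : ℝ) + 1)) * (x ^ 2 - 1)
            * (Polynomial.derivative (P k)).eval x
          + (2 * (l : ℝ) - 1) * x * (P k).eval x
        = ((k : ℝ) + 2 * (l : ℝ) + 1) * ptC l P Q k * (Q (k + 1)).eval x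
            + ζ * pC P Q k * (Q k).eval x := by
  intro k x
  constructor
  · have h := congrArg (Polynomial.eval x) (Stmt11Aux.part_a hl hζ hP hQ k)
    simp only [Polynomial.eval_add, Polynomial.eval_mul, Polynomial.eval_C] at h
    linear_combination h
  · have h := congrArg (Polynomial.eval x) (Stmt11Aux.part_b hl hζ hP hQ k)
    simp only [Polynomial.eval_add, Polynomial.eval_mul, Polynomial.eval_C,
      Polynomial.eval_sub, Polynomial.eval_pow, Polynomial.eval_X, Polynomial.eval_one] at h
    linear_combination h
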